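/- Let H be a d-ν-CA with default rule f, i.e., h_i = f for all |i| > k. If H is injective, then the CA F with local rule f is injective, and moreover H itself is surjective. -/

import Mathlib

set_option maxHeartbeats 1000000
set_option linter.unusedSectionVars false

namespace Stmt10

variable {A : Type} [Fintype A] [Nonempty A]

/-- the sliding window of radius `r` at position `i` -/
def win (r : ℕ) (x : ℤ → A) (i : ℤ) : Fin (2*r+1) → A :=
  fun j => x (i - (r:ℤ) + ((j:ℕ):ℤ))

section Basic

variable (r : ℕ) (f : (Fin (2*r+1) → A) → A) (F : (ℤ → A) → (ℤ → A))

lemma ftransSub (hF : ∀ (x : ℤ → A) (i : ℤ), F x i = f (win r x i))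
    (x : ℤ → A) (d i : ℤ) :
    F (fun t => x (t - d)) i = F x (i - d) := by
  rw [hF, hF]
  congr 1
  funext j
  simp only [win]
  congr 1
  ring

lemma preInj (hF : ∀ (x : ℤ → A) (i : ℤ), F x i = f (win r x i))
    (k : ℕ) (h : ℤ → (Fin (2*r+1) → A) → A)
    (hf : ∀ i : ℤ, (k:ℤ) < |i| → h i = f)
    (H : (ℤ → A) → (ℤ → A))
    (hH : ∀ (x : ℤ → A) (i : ℤ), H x i = h i (win r x i))
    (hHinj : Function.Injective H)
    (M : ℕ) (x y : ℤ → A)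
    (hoff : ∀ i : ℤ, M < i.natAbs → x i = y i)
    (hxy : F x = F y) : x = y := by
  set n : ℤ := (M:ℤ) + k + r + 1 with hn
  have key : H (fun t => x (t - n)) = H (fun t => y (t - n)) := by
    funext i
    rcases le_or_gt i.natAbs k with hik | hik
    · rw [hH, hH]
      congr 1
      funext j
      simp only [win]
      apply hoff
      have hj := j.isLt
      omega
    · have habs : (k:ℤ) < |i| := by rw [Int.abs_eq_natAbs]; exact_mod_cast hik
      rw [hH, hH, hf i habs, ← hF, ← hF,
        ftransSub r f F hF x n i, ftransSub r f F hF y n i, hxy]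
  have hxy' := hHinj key
  funext i
  have h2 := congrFun hxy' (i + n)
  simpa using h2

end Basic

/-! ### patching the center -/

def patch (k : ℕ) (Z : ℤ → A) (c : Fin (2*k+1) → A) : ℤ → A :=
  fun i => if h : i.natAbs ≤ k then c ⟨(i + k).toNat, by omega⟩ else Z i

lemma patch_off {k : ℕ} (Z : ℤ → A) (c : Fin (2*k+1) → A) {i : ℤ} (hi : k < i.natAbs) :
    patch k Z c i = Z i := dif_neg (by omega)

lemma patch_center {k : ℕ} (Z : ℤ → A) (c : Fin (2*k+1) → A) (t : Fin (2*k+1)) :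
    patch k Z c (((t:ℕ):ℤ) - k) = c t := by
  have ht := t.isLt
  unfold patch
  rw [dif_pos (by omega)]
  congr 1
  apply Fin.ext
  show ((((t:ℕ):ℤ) - k + k).toNat) = (t:ℕ)
  omega

lemma patch_inj {k : ℕ} (Z : ℤ → A) {c c' : Fin (2*k+1) → A}
    (hp : patch k Z c = patch k Z c') : c = c' := by
  funext t
  have h1 := congrFun hp (((t:ℕ):ℤ) - k)
  rwa [patch_center, patch_center] at h1

section Steps34

variable (r : ℕ) (f : (Fin (2*r+1) → A) → A) (F : (ℤ → A) → (ℤ → A))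
variable (k : ℕ) (h : ℤ → (Fin (2*r+1) → A) → A)
variable (H : (ℤ → A) → (ℤ → A))

lemma HeqF (hF : ∀ (x : ℤ → A) (i : ℤ), F x i = f (win r x i))
    (hf : ∀ i : ℤ, (k:ℤ) < |i| → h i = f)
    (hH : ∀ (x : ℤ → A) (i : ℤ), H x i = h i (win r x i))
    (w : ℤ → A) (i : ℤ) (hi : k < i.natAbs) : H w i = F w i := by
  rw [hH, hf i (by rw [Int.abs_eq_natAbs]; exact_mod_cast hi)]
  exact (hF w i).symm

lemma theta_inj (hF : ∀ (x : ℤ → A) (i : ℤ), F x i = f (win r x i))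
    (hf : ∀ i : ℤ, (k:ℤ) < |i| → h i = f)
    (hH : ∀ (x : ℤ → A) (i : ℤ), H x i = h i (win r x i))
    (hHinj : Function.Injective H)
    (Z w w' : ℤ → A)
    (hw : ∀ i : ℤ, k < i.natAbs → F w i = Z i)
    (hw' : ∀ i : ℤ, k < i.natAbs → F w' i = Z i)
    (hc : ∀ t : Fin (2*k+1), H w (((t:ℕ):ℤ) - k) = H w' (((t:ℕ):ℤ) - k)) :
    w = w' := by
  apply hHinj
  funext i
  by_cases hi : i.natAbs ≤ k
  · have h1 := hc ⟨(i + k).toNat, by omega⟩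
    have h2 : ((((i + k).toNat : ℕ):ℤ)) - (k:ℤ) = i := by omega
    rw [h2] at h1
    exact h1
  · rw [HeqF r f F k h H hF hf hH w i (by omega),
      HeqF r f F k h H hF hf hH w' i (by omega),
      hw i (by omega), hw' i (by omega)]

lemma Finj (hF : ∀ (x : ℤ → A) (i : ℤ), F x i = f (win r x i))
    (hf : ∀ i : ℤ, (k:ℤ) < |i| → h i = f)
    (hH : ∀ (x : ℤ → A) (i : ℤ), H x i = h i (win r x i))
    (hHinj : Function.Injective H)
    (hFsurj : Function.Surjective F) :
    Function.Injective F := by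
  classical
  intro x y hxy
  set Z := F x with hZ
  have hex : ∀ c : Fin (2*k+1) → A, ∃ wc, F wc = patch k Z c := fun c => hFsurj _
  choose wc hwc using hex
  have hTin : ∀ c i, k < i.natAbs → F (wc c) i = Z i := by
    intro c i hi; rw [hwc]; exact patch_off Z c hi
  have hθ : Function.Injective
      (fun c : Fin (2*k+1) → A => (fun t : Fin (2*k+1) => H (wc c) (((t:ℕ):ℤ) - k))) := by
    intro c c' hcc
    have h1 : wc c = wc c' :=
      theta_inj r f F k h H hF hf hH hHinj Z _ _ (hTin c) (hTin c')
        (fun t => congrFun hcc t)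
    have h2 := congrArg F h1
    rw [hwc, hwc] at h2
    exact patch_inj Z h2
  have hθs := Finite.surjective_of_injective hθ
  obtain ⟨cx, hcx⟩ := hθs (fun t => H x (((t:ℕ):ℤ) - k))
  obtain ⟨cy, hcy⟩ := hθs (fun t => H y (((t:ℕ):ℤ) - k))
  have hxin : ∀ i : ℤ, k < i.natAbs → F x i = Z i := fun i _ => rfl
  have hyin : ∀ i : ℤ, k < i.natAbs → F y i = Z i := fun i _ => (congrFun hxy i).symm
  have hx : wc cx = x :=
    theta_inj r f F k h H hF hf hH hHinj Z _ _ (hTin cx) hxin (fun t => congrFun hcx t)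
  have hy : wc cy = y :=
    theta_inj r f F k h H hF hf hH hHinj Z _ _ (hTin cy) hyin (fun t => congrFun hcy t)
  have hcc : cx = cy := by
    apply patch_inj Z
    rw [← hwc, ← hwc, hx, hy]
    exact hxy
  rw [← hx, ← hy, hcc]

lemma Hsurj (hF : ∀ (x : ℤ → A) (i : ℤ), F x i = f (win r x i))
    (hf : ∀ i : ℤ, (k:ℤ) < |i| → h i = f)
    (hH : ∀ (x : ℤ → A) (i : ℤ), H x i = h i (win r x i))
    (hHinj : Function.Injective H)
    (hFsurj : Function.Surjective F) :
    Function.Surjective H := by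
  classical
  intro zt
  have hex : ∀ c : Fin (2*k+1) → A, ∃ wc, F wc = patch k zt c := fun c => hFsurj _
  choose wc hwc using hex
  have hTin : ∀ c i, k < i.natAbs → F (wc c) i = zt i := by
    intro c i hi; rw [hwc]; exact patch_off zt c hi
  have hθ : Function.Injective
      (fun c : Fin (2*k+1) → A => (fun t : Fin (2*k+1) => H (wc c) (((t:ℕ):ℤ) - k))) := by
    intro c c' hcc
    have h1 : wc c = wc c' :=
      theta_inj r f F k h H hF hf hH hHinj zt _ _ (hTin c) (hTin c')
        (fun t => congrFun hcc t)
    have h2 := congrArg F h1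
    rw [hwc, hwc] at h2
    exact patch_inj zt h2
  obtain ⟨c, hc⟩ := (Finite.surjective_of_injective hθ) (fun t => zt (((t:ℕ):ℤ) - k))
  refine ⟨wc c, ?_⟩
  funext i
  by_cases hi : i.natAbs ≤ k
  · have h1 : H (wc c) ((((i + k).toNat : ℕ):ℤ) - (k:ℤ)) = zt ((((i + k).toNat : ℕ):ℤ) - (k:ℤ)) :=
      congrFun hc ⟨(i+k).toNat, by omega⟩
    have h2 : ((((i + k).toNat : ℕ):ℤ)) - (k:ℤ) = i := by omega
    rw [h2] at h1
    exact h1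
  · rw [HeqF r f F k h H hF hf hH (wc c) i (by omega), hTin c i (by omega)]

end Steps34


lemma arith_contra (Q b : ℕ) (hQ : 2 ≤ Q) (hb : 1 ≤ b) :
    ¬ (Q^(b*Q) * b^(b*Q) ≤ (b*b) * ((Q-1)^(b*Q) * b^(b*Q - 1))) := by
  intro hle
  set m := b*Q with hm
  have hm1 : 1 ≤ m := by
    have h0 : 1*2 ≤ b*Q := Nat.mul_le_mul hb hQ
    omega
  have hbm : (b*b) * b^(m-1) = b^(m+1) := by
    have h1 : b^(m-1) * b^2 = b^(m+1) := by
      rw [← pow_add]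
      congr 1
      omega
    calc (b*b) * b^(m-1) = b^(m-1) * b^2 := by ring
    _ = b^(m+1) := h1
  have hle2 : Q^m * b^m ≤ (Q-1)^m * b^(m+1) := by
    calc Q^m * b^m ≤ (b*b) * ((Q-1)^m * b^(m-1)) := hle
    _ = (Q-1)^m * ((b*b) * b^(m-1)) := by ring
    _ = (Q-1)^m * b^(m+1) := by rw [hbm]
  have hle3 : Q^m ≤ (Q-1)^m * b := by
    have hpos : 0 < b^m := pow_pos (by omega) m
    have h1 : Q^m * b^m ≤ ((Q-1)^m * b) * b^m := by
      calc Q^m * b^m ≤ (Q-1)^m * b^(m+1) := hle2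
      _ = ((Q-1)^m * b) * b^m := by rw [pow_succ]; ring
    exact Nat.le_of_mul_le_mul_right h1 hpos
  set p := Q - 1 with hp
  have hp1 : 1 ≤ p := by omega
  have hQp : Q = p + 1 := by omega
  have hkey : ∀ mm : ℕ, p^mm * (mm + p) ≤ (p+1)^mm * p := by
    intro mm
    induction mm with
    | zero => simp
    | succ mm ih =>
      have key2 : p*(mm+1+p) ≤ (mm+p)*(p+1) := by nlinarith
      calc p^(mm+1) * (mm+1+p) = p^mm * (p*(mm+1+p)) := by ring
      _ ≤ p^mm * ((mm+p)*(p+1)) := Nat.mul_le_mul_left _ key2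
      _ = (p^mm * (mm+p)) * (p+1) := by ring
      _ ≤ ((p+1)^mm * p) * (p+1) := Nat.mul_le_mul_right _ ih
      _ = (p+1)^(mm+1) * p := by ring
  have h5 : p^m * (m + p) ≤ p^m * (b*p) := by
    calc p^m * (m+p) ≤ (p+1)^m * p := hkey m
    _ ≤ (p^m * b) * p := by
        rw [← hQp]
        exact Nat.mul_le_mul_right p hle3
    _ = p^m * (b*p) := by ring
  have h6 : m + p ≤ b * p := Nat.le_of_mul_le_mul_left h5 (pow_pos (by omega) m)
  have h7 : m = b*p + b := by rw [hm, hQp]; ring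
  have h8 : b*p + b ≤ m := le_of_eq h7.symm
  -- m + p ≤ b*p and m = b*p + b : contradiction
  have := h7 ▸ h6
  omega



variable {A : Type} [Fintype A] [Nonempty A]

def emb (a0 : A) (L : ℕ) (u : Fin L → A) : ℤ → A :=
  fun i => if h : 0 ≤ i ∧ i < (L:ℤ) then u ⟨i.toNat, by omega⟩ else a0

lemma emb_in (a0 : A) {L : ℕ} (u : Fin L → A) {i : ℤ} (h : 0 ≤ i ∧ i < (L:ℤ)) :
    emb a0 L u i = u ⟨i.toNat, by omega⟩ := dif_pos h

lemma emb_out (a0 : A) {L : ℕ} (u : Fin L → A) {i : ℤ} (h : ¬(0 ≤ i ∧ i < (L:ℤ))) :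
    emb a0 L u i = a0 := dif_neg h

lemma emb_coe (a0 : A) {L : ℕ} (u : Fin L → A) (j : Fin L) :
    emb a0 L u ((j:ℕ):ℤ) = u j := by
  rw [emb_in a0 u ⟨by positivity, by exact_mod_cast j.isLt⟩]
  congr


lemma myhill (r : ℕ) (f : (Fin (2*r+1) → A) → A) (F : (ℤ → A) → (ℤ → A))
    (hF : ∀ (x : ℤ → A) (i : ℤ), F x i = f (win r x i))
    (hA : 1 < Fintype.card A)
    (hPI : ∀ (M : ℕ) (x y : ℤ → A),
      (∀ i : ℤ, M < i.natAbs → x i = y i) → F x = F y → x = y) :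
    Function.Surjective F := by
  classical
  by_contra hns
  rw [Function.Surjective] at hns
  push_neg at hns
  obtain ⟨z, hz⟩ := hns
  -- topology: find a finite "orphan" window
  letI : TopologicalSpace A := ⊥
  haveI : DiscreteTopology A := ⟨rfl⟩
  have contF : Continuous F := by
    have hFe : F = fun x => fun i => f (win r x i) := by
      funext x i; exact hF x i
    rw [hFe]
    refine continuous_pi fun i => ?_
    exact Continuous.comp continuous_of_discreteTopology
      (continuous_pi fun j => continuous_apply _)
  have hcl : IsClosed (Set.range F) := (isCompact_range contF).isClosed
  have hzc : z ∈ (Set.range F)ᶜ := by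
    intro hmem
    obtain ⟨x, hx⟩ := hmem
    exact hz x hx
  obtain ⟨I, U, hIU, hsub⟩ := (isOpen_pi_iff.mp hcl.isOpen_compl) z hzc
  set n : ℕ := I.sup (fun i => i.natAbs) with hn
  have orphanC : ∀ x : ℤ → A, ∃ i : ℤ, i.natAbs ≤ n ∧ F x i ≠ z i := by
    intro x
    by_contra hq
    push_neg at hq
    have hmem : F x ∈ (I : Set ℤ).pi U := by
      intro i hi
      have h1 : i.natAbs ≤ n := Finset.le_sup (f := fun i => i.natAbs) hi
      have h2 : F x i = z i := hq i h1
      rw [h2]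
      exact (hIU i hi).2
    exact (hsub hmem) ⟨x, rfl⟩
  -- counting setup
  set a : ℕ := Fintype.card A with ha
  set el : ℕ := 2*n+1 with hel
  set Q : ℕ := a^el with hQdef
  set b : ℕ := a^(2*r) with hbdef
  set m : ℕ := b*Q with hmdef
  set s : ℕ := el + 2*r with hsdef
  set L : ℕ := m*s with hLdef
  set Li : ℕ := L - 2*r with hLidef
  have ha2 : 2 ≤ a := hA
  have hQ2 : 2 ≤ Q := by
    have h1 : 1 < a^el := Nat.one_lt_pow (by omega) (by omega)
    omega
  have hb1 : 1 ≤ b := Nat.one_le_iff_ne_zero.mpr (pow_ne_zero _ (by omega))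
  have hm1 : 1 ≤ m := by
    have := Nat.mul_le_mul hb1 hQ2
    omega
  have hsm : s ≤ m * s := Nat.le_mul_of_pos_left s (show 0 < m by omega)
  have hsL : 2*r < L := by omega
  have a0 : A := Classical.arbitrary A
  -- orphan at arbitrary positions
  have wordGen : ∀ (x : ℤ → A) (pos : ℤ),
      ∃ o : Fin el, F x (pos + ((o:ℕ):ℤ)) ≠ z (((o:ℕ):ℤ) - n) := by
    intro x pos
    obtain ⟨i, hi, hne⟩ := orphanC (fun t => x (t + (pos + n)))
    have htr : F (fun t => x (t + (pos + n))) i = F x (i + (pos + n)) := by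
      rw [hF, hF]
      congr 1
      funext j
      simp only [win]
      congr 1
      ring
    refine ⟨⟨(i + n).toNat, by omega⟩, ?_⟩
    have h1 : pos + ((((i+n).toNat : ℕ)):ℤ) = i + (pos + n) := by
      show pos + (((i+n).toNat : ℕ):ℤ) = i + (pos + n)
      omega
    have h2 : ((((i+n).toNat : ℕ)):ℤ) - (n:ℤ) = i := by omega
    show F x (pos + (((i+n).toNat : ℕ):ℤ)) ≠ z ((((i+n).toNat : ℕ):ℤ) - n)
    rw [h1, ← htr, h2]
    exact hne
  set w : Fin el → A := fun o => z (((o:ℕ):ℤ) - n) with hwdef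
  -- border and image maps
  let bL : (Fin L → A) → (Fin (2*r) → A) := fun u j => u ⟨(j:ℕ), by have := j.isLt; omega⟩
  let bR : (Fin L → A) → (Fin (2*r) → A) := fun u j => u ⟨L - 2*r + (j:ℕ), by have := j.isLt; omega⟩
  let img : (Fin L → A) → (Fin Li → A) := fun u t => F (emb a0 L u) (((t:ℕ):ℤ) + r)
  -- main injectivity from pre-injectivity
  have inj1 : ∀ u v : Fin L → A, bL u = bL v → bR u = bR v → img u = img v → u = v := by
    intro u v hbL hbR himg
    have hEmb : emb a0 L u = emb a0 L v := by
      apply hPI L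
      · intro i hi
        rw [emb_out a0 u (by omega), emb_out a0 v (by omega)]
      · funext i
        by_cases hmid : (r:ℤ) ≤ i ∧ i < (L:ℤ) - r
        · have hti : (i - r).toNat < Li := by omega
          have e1 : F (emb a0 L u) i = img u ⟨(i-r).toNat, hti⟩ := by
            show _ = F (emb a0 L u) _
            congr 1
            simp only [Fin.val_mk]
            omega
          have e2 : F (emb a0 L v) i = img v ⟨(i-r).toNat, hti⟩ := by
            show _ = F (emb a0 L v) _
            congr 1
            simp only [Fin.val_mk]
            omega
          rw [e1, e2, himg]
        · rw [hF, hF]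
          congr 1
          funext j
          simp only [win]
          have hj := j.isLt
          set c : ℤ := i - r + ((j:ℕ):ℤ) with hc
          by_cases hin : 0 ≤ c ∧ c < (L:ℤ)
          · rw [emb_in a0 u hin, emb_in a0 v hin]
            have hcL : c.toNat < L := by omega
            rcases (show c.toNat < 2*r ∨ (L - 2*r ≤ c.toNat) by omega) with hsml | hbig
            · exact congrFun hbL ⟨c.toNat, hsml⟩
            · have hgoal := congrFun hbR ⟨c.toNat - (L - 2*r), by omega⟩
              have hndx : (⟨L - 2*r + (c.toNat - (L - 2*r)), by omega⟩ : Fin L)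
                  = ⟨c.toNat, hcL⟩ := Fin.ext (by show L - 2*r + (c.toNat - (L - 2*r)) = c.toNat; omega)
              show u ⟨c.toNat, hcL⟩ = v ⟨c.toNat, hcL⟩
              rw [← hndx]
              exact hgoal
          · rw [emb_out a0 u hin, emb_out a0 v hin]
    funext j
    have h1 := congrFun hEmb ((j:ℕ):ℤ)
    rwa [emb_coe, emb_coe] at h1
  -- block/gap decomposition of image words
  have idx_blk : ∀ (j : Fin m) (o : Fin el), (j:ℕ)*s + (o:ℕ) < Li := by
    intro j o
    have h1 : ((j:ℕ)+1)*s ≤ m*s := Nat.mul_le_mul_right s j.isLt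
    have h2 : (j:ℕ)*s + s = ((j:ℕ)+1)*s := by ring
    have h3 := o.isLt
    omega
  have idx_gap : ∀ (j : Fin (m-1)) (g : Fin (2*r)), (j:ℕ)*s + el + (g:ℕ) < Li := by
    intro j g
    have h1 : ((j:ℕ)+1)*s ≤ (m-1)*s := Nat.mul_le_mul_right s j.isLt
    have h2 : (j:ℕ)*s + s = ((j:ℕ)+1)*s := by ring
    have h4 : (m-1)+1 = m := by omega
    have h3 : (m-1)*s + s = m*s := by
      calc (m-1)*s + s = ((m-1)+1)*s := by ring
      _ = m*s := by rw [h4]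
    have h5 := g.isLt
    omega
  let blkI : (Fin Li → A) → Fin m → Fin el → A :=
    fun v j o => v ⟨(j:ℕ)*s + (o:ℕ), idx_blk j o⟩
  let gapI : (Fin Li → A) → Fin (m-1) → Fin (2*r) → A :=
    fun v j g => v ⟨(j:ℕ)*s + el + (g:ℕ), idx_gap j g⟩
  have recon : ∀ v v' : Fin Li → A,
      (∀ j, blkI v j = blkI v' j) → (∀ j, gapI v j = gapI v' j) → v = v' := by
    intro v v' hB hG
    funext t
    have hdm := Nat.div_add_mod' (t:ℕ) s
    have hmod : (t:ℕ) % s < s := Nat.mod_lt _ (by omega)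
    have htl := t.isLt
    by_cases hcase : (t:ℕ) % s < el
    · have hjm : (t:ℕ)/s < m := by
        by_contra hge
        push_neg at hge
        have h5 : m*s ≤ ((t:ℕ)/s)*s := Nat.mul_le_mul_right s hge
        have h6 : ((t:ℕ)/s)*s ≤ (t:ℕ) := Nat.div_mul_le_self _ _
        omega
      have h6 : v ⟨((t:ℕ)/s)*s + (t:ℕ)%s, by have := idx_blk ⟨(t:ℕ)/s, hjm⟩ ⟨(t:ℕ)%s, hcase⟩; simpa using this⟩
          = v' ⟨((t:ℕ)/s)*s + (t:ℕ)%s, by have := idx_blk ⟨(t:ℕ)/s, hjm⟩ ⟨(t:ℕ)%s, hcase⟩; simpa using this⟩ :=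
        congrFun (hB ⟨(t:ℕ)/s, hjm⟩) ⟨(t:ℕ)%s, hcase⟩
      have h8 : (⟨((t:ℕ)/s)*s + (t:ℕ)%s, by have := idx_blk ⟨(t:ℕ)/s, hjm⟩ ⟨(t:ℕ)%s, hcase⟩; simpa using this⟩ : Fin Li) = t :=
        Fin.ext (by show ((t:ℕ)/s)*s + (t:ℕ)%s = (t:ℕ); omega)
      rw [h8] at h6
      exact h6
    · push_neg at hcase
      have hjm : (t:ℕ)/s < m - 1 := by
        by_contra hge
        push_neg at hge
        have h5 : (m-1)*s ≤ ((t:ℕ)/s)*s := Nat.mul_le_mul_right s hge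
        have h6 : ((t:ℕ)/s)*s ≤ (t:ℕ) := Nat.div_mul_le_self _ _
        have h4 : (m-1)+1 = m := by omega
        have h3 : (m-1)*s + s = m*s := by
          calc (m-1)*s + s = ((m-1)+1)*s := by ring
          _ = m*s := by rw [h4]
        omega
      have h6 : v ⟨((t:ℕ)/s)*s + el + ((t:ℕ)%s - el), by have := idx_gap ⟨(t:ℕ)/s, hjm⟩ ⟨(t:ℕ)%s - el, by omega⟩; simpa using this⟩
          = v' ⟨((t:ℕ)/s)*s + el + ((t:ℕ)%s - el), by have := idx_gap ⟨(t:ℕ)/s, hjm⟩ ⟨(t:ℕ)%s - el, by omega⟩; simpa using this⟩ :=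
        congrFun (hG ⟨(t:ℕ)/s, hjm⟩) ⟨(t:ℕ)%s - el, by omega⟩
      have h8 : (⟨((t:ℕ)/s)*s + el + ((t:ℕ)%s - el), by have := idx_gap ⟨(t:ℕ)/s, hjm⟩ ⟨(t:ℕ)%s - el, by omega⟩; simpa using this⟩ : Fin Li) = t :=
        Fin.ext (by show ((t:ℕ)/s)*s + el + ((t:ℕ)%s - el) = (t:ℕ); omega)
      rw [h8] at h6
      exact h6
  -- every block of an image word avoids w
  have avoidP : ∀ (u : Fin L → A) (j : Fin m), blkI (img u) j ≠ w := by
    intro u j hEqw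
    obtain ⟨o, ho⟩ := wordGen (emb a0 L u) ((((j:ℕ)*s + r : ℕ)):ℤ)
    apply ho
    have h1 : F (emb a0 L u) (((((j:ℕ)*s + (o:ℕ) : ℕ)):ℤ) + (r:ℤ)) = z (((o:ℕ):ℤ) - (n:ℤ)) :=
      congrFun hEqw o
    have h2 : ((((j:ℕ)*s + r : ℕ)):ℤ) + ((o:ℕ):ℤ) = ((((j:ℕ)*s + (o:ℕ) : ℕ)):ℤ) + (r:ℤ) := by
      push_cast
      ring
    rw [h2, h1]
  -- the injection and the cardinality contradiction
  let Wt := {g : Fin el → A // g ≠ w}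
  let map2 : (Fin L → A) →
      ((Fin (2*r) → A) × (Fin (2*r) → A)) × (Fin m → Wt) × (Fin (m-1) → Fin (2*r) → A) :=
    fun u => ((bL u, bR u), (fun j => ⟨blkI (img u) j, avoidP u j⟩, fun j => gapI (img u) j))
  have hinj2 : Function.Injective map2 := by
    intro u v huv
    have h1 : bL u = bL v := congrArg (fun p => p.1.1) huv
    have h2 : bR u = bR v := congrArg (fun p => p.1.2) huv
    have h3 : ∀ j, blkI (img u) j = blkI (img v) j := fun j =>
      congrArg Subtype.val (congrFun (congrArg (fun p => p.2.1) huv) j)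
    have h4 : ∀ j, gapI (img u) j = gapI (img v) j := fun j =>
      congrFun (congrArg (fun p => p.2.2) huv) j
    exact inj1 u v h1 h2 (recon _ _ h3 h4)
  have hcard := Fintype.card_le_of_injective map2 hinj2
  have cW : Fintype.card Wt = Q - 1 := by
    have h1 : Fintype.card Wt = Fintype.card (Fin el → A) - Fintype.card {g : Fin el → A // g = w} :=
      Fintype.card_subtype_compl _
    rw [h1, Fintype.card_subtype_eq]
    congr 1
    simp [Fintype.card_fun]
    rfl
  have hcards : a^L ≤ (b * b) * ((Q-1)^m * b^(m-1)) := by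
    calc a^L = Fintype.card (Fin L → A) := by simp [Fintype.card_fun]; rfl
    _ ≤ Fintype.card
        (((Fin (2*r) → A) × (Fin (2*r) → A)) × (Fin m → Wt) × (Fin (m-1) → Fin (2*r) → A)) := hcard
    _ = (b * b) * ((Q-1)^m * b^(m-1)) := by
        simp [Fintype.card_fun, cW, Fintype.card_prod]
        rfl
  have hpow : a^L = Q^m * b^m := by
    calc a^L = a^(s*m) := by rw [hLdef, Nat.mul_comm]
    _ = (a^s)^m := pow_mul a s m
    _ = (a^el * a^(2*r))^m := by rw [hsdef, pow_add]
    _ = (a^el)^m * (a^(2*r))^m := mul_pow _ _ _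
    _ = Q^m * b^m := by rw [← hQdef, ← hbdef]
  rw [hpow] at hcards
  rw [hmdef] at hcards
  exact arith_contra Q b hQ2 hb1 hcards


end Stmt10

/-- For a d-ν-CA `H` with default rule `f` (radius `r`, `h_i = f` for `|i| > k`):
if `H` is injective then the CA `F` with rule `f` is injective, and `H` is surjective. -/
theorem stmt_10 {A : Type} [Fintype A] [Nonempty A]
    (r k : ℕ)
    (h : ℤ → (Fin (2 * r + 1) → A) → A)
    (f : (Fin (2 * r + 1) → A) → A)
    (hf : ∀ i : ℤ, (k : ℤ) < |i| → h i = f)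
    (H F : (ℤ → A) → (ℤ → A))
    (hH : ∀ (x : ℤ → A) (i : ℤ),
      H x i = h i (fun j => x (i - (r : ℤ) + ((j : ℕ) : ℤ))))
    (hF : ∀ (x : ℤ → A) (i : ℤ),
      F x i = f (fun j => x (i - (r : ℤ) + ((j : ℕ) : ℤ)))) :
    Function.Injective H → Function.Injective F ∧ Function.Surjective H := by
  intro hHinj
  classical
  by_cases hA : 1 < Fintype.card A
  · have hwinH : ∀ (x : ℤ → A) (i : ℤ), H x i = h i (Stmt10.win r x i) := hH
    have hwinF : ∀ (x : ℤ → A) (i : ℤ), F x i = f (Stmt10.win r x i) := hF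
    have hPI : ∀ (M : ℕ) (x y : ℤ → A),
        (∀ i : ℤ, M < i.natAbs → x i = y i) → F x = F y → x = y :=
      fun M x y hoff hxy =>
        Stmt10.preInj r f F hwinF k h hf H hwinH hHinj M x y hoff hxy
    have hFs : Function.Surjective F := Stmt10.myhill r f F hwinF hA hPI
    exact ⟨Stmt10.Finj r f F k h H hwinF hf hwinH hHinj hFs,
      Stmt10.Hsurj r f F k h H hwinF hf hwinH hHinj hFs⟩
  · have hsub : Subsingleton A :=
      Fintype.card_le_one_iff_subsingleton.mp (by omega)
    refine ⟨fun x y _ => funext fun i => Subsingleton.elim _ _,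
      fun t => ⟨t, funext fun i => Subsingleton.elim _ _⟩⟩
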